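/- Let G be a non-trivial finite simple graph of order n and maximum degree Δ, with no isolated vertices. If χ_NL(G) = k and Δ ≤ k − 1, then n ≤ k·(2^(k−1) − 1) and n ≤ k·∑_{j=1}^{Δ} C(k−1, j), where C(·,·) denotes the binomial coefficient. -/

import Mathlib

open SimpleGraph

/-- A coloring `c : V → Fin k` is a *neighbor-locating coloring* of `G` if it is proper and
any two distinct vertices with the same color have different sets of colors on their
open neighborhoods. -/
def IsNLColoring {V : Type*} (G : SimpleGraph V) {k : ℕ} (c : V → Fin k) : Prop :=
  (∀ u v : V, G.Adj u v → c u ≠ c v) ∧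
  ∀ u v : V, u ≠ v → c u = c v → c '' (G.neighborSet u) ≠ c '' (G.neighborSet v)

/-- The neighbor-locating chromatic number: the least `k` admitting an NL-coloring. -/
noncomputable def nlChromaticNumber {V : Type*} (G : SimpleGraph V) : ℕ :=
  sInf {k : ℕ | ∃ c : V → Fin k, IsNLColoring G c}

lemma count_small_subsets {α : Type*} [DecidableEq α] (A : Finset α) (d : ℕ) :
    (A.powerset.filter (fun s => s.Nonempty ∧ s.card ≤ d)).card
      = ∑ j ∈ Finset.Icc 1 d, A.card.choose j := by
  have heq : A.powerset.filter (fun s => s.Nonempty ∧ s.card ≤ d)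
      = (Finset.Icc 1 d).biUnion (fun j => A.powersetCard j) := by
    ext s
    simp only [Finset.mem_filter, Finset.mem_powerset, Finset.mem_biUnion, Finset.mem_Icc,
      Finset.mem_powersetCard]
    constructor
    · rintro ⟨h1, h2, h3⟩
      exact ⟨s.card, ⟨Finset.card_pos.mpr h2, h3⟩, h1, rfl⟩
    · rintro ⟨j, ⟨hj1, hj2⟩, hsub, rfl⟩
      exact ⟨hsub, Finset.card_pos.mp hj1, hj2⟩
  rw [heq, Finset.card_biUnion]
  · exact Finset.sum_congr rfl fun j _ => Finset.card_powersetCard j A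
  · intro x _ y _ hxy
    refine Finset.disjoint_left.mpr fun s hs hs' => hxy ?_
    rw [Finset.mem_powersetCard] at hs hs'
    exact hs.2.symm.trans hs'.2

lemma sum_Icc_choose_eq (m : ℕ) :
    ∑ j ∈ Finset.Icc 1 m, m.choose j = 2 ^ m - 1 := by
  have h := Nat.sum_range_choose m
  have h2 : ∑ j ∈ Finset.range (m + 1), m.choose j
      = m.choose 0 + ∑ j ∈ Finset.Icc 1 m, m.choose j := by
    rw [Finset.range_eq_Ico, Finset.sum_eq_sum_Ico_succ_bot (Nat.succ_pos m),
      ← Finset.Ico_add_one_right_eq_Icc]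
    rfl
  have h1 : (1 : ℕ) ≤ 2 ^ m := Nat.one_le_two_pow
  simp only [Nat.choose_zero_right] at h2
  omega

/-- Bounds on the order of a non-trivial graph without isolated vertices in terms of its
NL-chromatic number `k` and maximum degree `Δ ≤ k - 1`. -/
theorem card_le_of_nlChromaticNumber_eq_of_no_isolated
    {V : Type*} [Fintype V] (G : SimpleGraph V) [DecidableRel G.Adj]
    (hn : 2 ≤ Fintype.card V) (hiso : ∀ v : V, G.degree v ≠ 0)
    (k : ℕ) (hk : nlChromaticNumber G = k) (hΔ : G.maxDegree ≤ k - 1) :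
    Fintype.card V ≤ k * (2 ^ (k - 1) - 1) ∧
      Fintype.card V ≤ k * ∑ j ∈ Finset.Icc 1 G.maxDegree, (k - 1).choose j := by
  classical
  -- The defining set is nonempty: an injective coloring works.
  have hmem : Fintype.card V ∈ {k : ℕ | ∃ c : V → Fin k, IsNLColoring G c} := by
    obtain ⟨e⟩ := Fintype.truncEquivFin V
    exact ⟨e, fun u v h hc => (G.ne_of_adj h) (e.injective hc),
      fun u v huv hc _ => huv (e.injective hc)⟩
  obtain ⟨c, hcp, hcnl⟩ : ∃ c : V → Fin k, IsNLColoring G c := by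
    rw [← hk]; exact Nat.sInf_mem ⟨_, hmem⟩
  -- k ≥ 1 since V is nonempty
  have hV : Nonempty V := Fintype.card_pos_iff.mp (by omega)
  have hk1 : 1 ≤ k := by
    have := (c hV.some).isLt; omega
  set Δ := G.maxDegree with hΔdef
  set f : V → Fin k × Finset (Fin k) :=
    fun v => (c v, (G.neighborFinset v).image c) with hf
  have himg : ∀ v : V, ((G.neighborFinset v).image c : Set (Fin k)) = c '' (G.neighborSet v) := by
    intro v
    simp [Finset.coe_image, SimpleGraph.neighborFinset_def, Set.coe_toFinset]
  have hinj : Set.InjOn f ↑(Finset.univ : Finset V) := by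
    intro u _ v _ huv
    by_contra hne
    obtain ⟨h1, h2⟩ := Prod.mk.injEq .. ▸ huv
    exact hcnl u v hne h1 (by rw [← himg u, ← himg v, h2])
  set T : Finset (Fin k × Finset (Fin k)) := (Finset.univ : Finset (Fin k)).biUnion
    (fun i => ((Finset.univ.erase i).powerset.filter
      (fun s => s.Nonempty ∧ s.card ≤ Δ)).image (fun s => (i, s))) with hT
  have hsub : ∀ v : V, f v ∈ T := by
    intro v
    rw [hT, Finset.mem_biUnion]
    refine ⟨c v, Finset.mem_univ _, Finset.mem_image.mpr ⟨(G.neighborFinset v).image c, ?_, rfl⟩⟩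
    rw [Finset.mem_filter, Finset.mem_powerset]
    refine ⟨?_, ?_, ?_⟩
    · intro x hx
      obtain ⟨w, hw, rfl⟩ := Finset.mem_image.mp hx
      refine Finset.mem_erase.mpr ⟨?_, Finset.mem_univ _⟩
      exact fun h => hcp v w ((G.mem_neighborFinset v w).mp hw) h.symm
    · obtain ⟨w, hw⟩ := Finset.card_pos.mp (Nat.pos_of_ne_zero (hiso v))
      exact ⟨c w, Finset.mem_image_of_mem c hw⟩
    · calc ((G.neighborFinset v).image c).card ≤ (G.neighborFinset v).card :=
            Finset.card_image_le
        _ = G.degree v := (G.card_neighborFinset_eq_degree v)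
        _ ≤ Δ := G.degree_le_maxDegree v
  have hcardT : T.card = k * ∑ j ∈ Finset.Icc 1 Δ, (k - 1).choose j := by
    rw [hT, Finset.card_biUnion]
    · have : ∀ i : Fin k,
          (((Finset.univ.erase i).powerset.filter
            (fun s => s.Nonempty ∧ s.card ≤ Δ)).image (fun s => (i, s))).card
          = ∑ j ∈ Finset.Icc 1 Δ, (k - 1).choose j := by
        intro i
        rw [Finset.card_image_of_injective _ (fun a b h => (Prod.mk.injEq .. ▸ h).2),
          count_small_subsets, Finset.card_erase_of_mem (Finset.mem_univ i)]
        simp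
      rw [Finset.sum_congr rfl fun i _ => this i]
      simp [mul_comm]
    · intro x _ y _ hxy
      refine Finset.disjoint_left.mpr fun p hp hp' => hxy ?_
      obtain ⟨s, _, rfl⟩ := Finset.mem_image.mp hp
      obtain ⟨t, _, ht⟩ := Finset.mem_image.mp hp'
      exact (congrArg Prod.fst ht).symm
  have hcardV : Fintype.card V ≤ k * ∑ j ∈ Finset.Icc 1 Δ, (k - 1).choose j := by
    rw [← hcardT, ← Finset.card_univ]
    exact Finset.card_le_card_of_injOn f (fun v _ => hsub v) hinj
  refine ⟨?_, hcardV⟩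
  calc Fintype.card V ≤ k * ∑ j ∈ Finset.Icc 1 Δ, (k - 1).choose j := hcardV
    _ ≤ k * ∑ j ∈ Finset.Icc 1 (k - 1), (k - 1).choose j := by
        refine Nat.mul_le_mul_left k (Finset.sum_le_sum_of_subset ?_)
        exact Finset.Icc_subset_Icc_right hΔ
    _ = k * (2 ^ (k - 1) - 1) := by rw [sum_Icc_choose_eq]
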